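/- For nonnegative reals a₀,...,a_K and q ∈ (0,1): ∑_{j=0}^{K}∑_{s=j+1}^{K} q^{2K−j−s} · 2·a_j·a_s ≤ (2/(1−q)) ∑_{j=0}^{K} q^{K−j} a_j². -/
import Mathlib


theorem stmt_11 (q : ℝ) (hq0 : 0 < q) (hq1 : q < 1) (K : ℕ)
    (a : ℕ → ℝ) (ha : ∀ j, 0 ≤ a j) :
    ∑ j ∈ Finset.range (K + 1), ∑ s ∈ Finset.Icc (j + 1) K,
        q ^ (2 * K - j - s) * (2 * a j * a s) ≤
      (2 / (1 - q)) * ∑ j ∈ Finset.range (K + 1), q ^ (K - j) * a j ^ 2 := by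
  have hq1' : (0:ℝ) < 1 - q := by linarith
  -- geometric sum bound
  have hgeo : ∀ n : ℕ, ∑ i ∈ Finset.range n, q ^ i ≤ 1 / (1 - q) := by
    intro n
    have h := geom_sum_eq (ne_of_lt hq1) n
    have heq : (q ^ n - 1) / (q - 1) = (1 - q ^ n) / (1 - q) := by
      rw [div_eq_div_iff (by linarith) (by linarith)]; ring
    rw [h, heq]
    have hpow : 0 ≤ q ^ n := pow_nonneg hq0.le n
    gcongr
    · linarith
  have hrefl : ∑ j ∈ Finset.range (K + 1), q ^ (K - j) = ∑ j ∈ Finset.range (K + 1), q ^ j := by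
    have := Finset.sum_range_reflect (fun t => q ^ t) (K + 1)
    simpa using this
  have hsum : ∀ m : ℕ, m ≤ K + 1 → ∑ j ∈ Finset.range m, q ^ (K - j) ≤ 1 / (1 - q) := by
    intro m hm
    have hsub : ∑ j ∈ Finset.range m, q ^ (K - j) ≤ ∑ j ∈ Finset.range (K + 1), q ^ (K - j) := by
      apply Finset.sum_le_sum_of_subset_of_nonneg
      · exact Finset.range_subset_range.mpr hm
      · intro i _ _; positivity
    calc ∑ j ∈ Finset.range m, q ^ (K - j) ≤ ∑ j ∈ Finset.range (K + 1), q ^ (K - j) := hsub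
      _ = ∑ j ∈ Finset.range (K + 1), q ^ j := hrefl
      _ ≤ 1 / (1 - q) := hgeo _
  set S := ∑ j ∈ Finset.range (K + 1), q ^ (K - j) * a j ^ 2 with hS
  have hSnn : 0 ≤ S := by
    apply Finset.sum_nonneg
    intro j _
    have := ha j
    positivity
  -- step 1 : termwise AM-GM
  have step1 : ∑ j ∈ Finset.range (K + 1), ∑ s ∈ Finset.Icc (j + 1) K,
      q ^ (2 * K - j - s) * (2 * a j * a s) ≤
      ∑ j ∈ Finset.range (K + 1), ∑ s ∈ Finset.Icc (j + 1) K,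
      (q ^ (K - j) * q ^ (K - s) * a j ^ 2 + q ^ (K - j) * q ^ (K - s) * a s ^ 2) := by
    apply Finset.sum_le_sum
    intro j hj
    apply Finset.sum_le_sum
    intro s hs
    have hj' : j ≤ K := by
      have := Finset.mem_range.mp hj; omega
    have hs' := Finset.mem_Icc.mp hs
    have hexp : 2 * K - j - s = (K - j) + (K - s) := by omega
    rw [hexp, pow_add]
    have h2 : 2 * a j * a s ≤ a j ^ 2 + a s ^ 2 := two_mul_le_add_sq _ _
    calc q ^ (K - j) * q ^ (K - s) * (2 * a j * a s)
        ≤ q ^ (K - j) * q ^ (K - s) * (a j ^ 2 + a s ^ 2) := by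
          apply mul_le_mul_of_nonneg_left h2 (by positivity)
      _ = q ^ (K - j) * q ^ (K - s) * a j ^ 2 + q ^ (K - j) * q ^ (K - s) * a s ^ 2 := by ring
  -- split
  have hsplit : ∑ j ∈ Finset.range (K + 1), ∑ s ∈ Finset.Icc (j + 1) K,
      (q ^ (K - j) * q ^ (K - s) * a j ^ 2 + q ^ (K - j) * q ^ (K - s) * a s ^ 2) =
      (∑ j ∈ Finset.range (K + 1), ∑ s ∈ Finset.Icc (j + 1) K,
        q ^ (K - j) * q ^ (K - s) * a j ^ 2) +
      (∑ j ∈ Finset.range (K + 1), ∑ s ∈ Finset.Icc (j + 1) K,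
        q ^ (K - j) * q ^ (K - s) * a s ^ 2) := by
    rw [← Finset.sum_add_distrib]
    apply Finset.sum_congr rfl
    intro j _
    rw [← Finset.sum_add_distrib]
  -- bound A
  have hA : ∑ j ∈ Finset.range (K + 1), ∑ s ∈ Finset.Icc (j + 1) K,
      q ^ (K - j) * q ^ (K - s) * a j ^ 2 ≤ (1 / (1 - q)) * S := by
    rw [hS, Finset.mul_sum]
    apply Finset.sum_le_sum
    intro j hj
    have hj' : j ≤ K := by have := Finset.mem_range.mp hj; omega
    have heq : ∑ s ∈ Finset.Icc (j + 1) K, q ^ (K - j) * q ^ (K - s) * a j ^ 2 =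
        (q ^ (K - j) * a j ^ 2) * ∑ s ∈ Finset.Icc (j + 1) K, q ^ (K - s) := by
      rw [Finset.mul_sum]
      apply Finset.sum_congr rfl
      intro s _; ring
    rw [heq]
    have hin : ∑ s ∈ Finset.Icc (j + 1) K, q ^ (K - s) ≤ 1 / (1 - q) := by
      have hsub : ∑ s ∈ Finset.Icc (j + 1) K, q ^ (K - s) ≤
          ∑ s ∈ Finset.range (K + 1), q ^ (K - s) := by
        apply Finset.sum_le_sum_of_subset_of_nonneg
        · intro x hx
          have := Finset.mem_Icc.mp hx
          exact Finset.mem_range.mpr (by omega)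
        · intro i _ _; positivity
      calc ∑ s ∈ Finset.Icc (j + 1) K, q ^ (K - s) ≤ ∑ s ∈ Finset.range (K + 1), q ^ (K - s) := hsub
        _ = ∑ s ∈ Finset.range (K + 1), q ^ s := hrefl
        _ ≤ 1 / (1 - q) := hgeo _
    calc (q ^ (K - j) * a j ^ 2) * ∑ s ∈ Finset.Icc (j + 1) K, q ^ (K - s)
        ≤ (q ^ (K - j) * a j ^ 2) * (1 / (1 - q)) := by
          apply mul_le_mul_of_nonneg_left hin (by have := ha j; positivity)
      _ = 1 / (1 - q) * (q ^ (K - j) * a j ^ 2) := by ring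
  -- bound B : swap sums
  have hswap : ∑ j ∈ Finset.range (K + 1), ∑ s ∈ Finset.Icc (j + 1) K,
      q ^ (K - j) * q ^ (K - s) * a s ^ 2 =
      ∑ s ∈ Finset.range (K + 1), ∑ j ∈ Finset.range s,
      q ^ (K - j) * q ^ (K - s) * a s ^ 2 := by
    apply Finset.sum_comm'
    intro j s
    simp only [Finset.mem_range, Finset.mem_Icc]
    omega
  have hB : ∑ j ∈ Finset.range (K + 1), ∑ s ∈ Finset.Icc (j + 1) K,
      q ^ (K - j) * q ^ (K - s) * a s ^ 2 ≤ (1 / (1 - q)) * S := by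
    rw [hswap, hS, Finset.mul_sum]
    apply Finset.sum_le_sum
    intro s hs
    have hs' : s ≤ K := by have := Finset.mem_range.mp hs; omega
    have heq : ∑ j ∈ Finset.range s, q ^ (K - j) * q ^ (K - s) * a s ^ 2 =
        (q ^ (K - s) * a s ^ 2) * ∑ j ∈ Finset.range s, q ^ (K - j) := by
      rw [Finset.mul_sum]
      apply Finset.sum_congr rfl
      intro j _; ring
    rw [heq]
    have hin : ∑ j ∈ Finset.range s, q ^ (K - j) ≤ 1 / (1 - q) := hsum s (by omega)
    calc (q ^ (K - s) * a s ^ 2) * ∑ j ∈ Finset.range s, q ^ (K - j)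
        ≤ (q ^ (K - s) * a s ^ 2) * (1 / (1 - q)) := by
          apply mul_le_mul_of_nonneg_left hin (by have := ha s; positivity)
      _ = 1 / (1 - q) * (q ^ (K - s) * a s ^ 2) := by ring
  calc ∑ j ∈ Finset.range (K + 1), ∑ s ∈ Finset.Icc (j + 1) K,
      q ^ (2 * K - j - s) * (2 * a j * a s)
      ≤ ∑ j ∈ Finset.range (K + 1), ∑ s ∈ Finset.Icc (j + 1) K,
        (q ^ (K - j) * q ^ (K - s) * a j ^ 2 + q ^ (K - j) * q ^ (K - s) * a s ^ 2) := step1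
    _ = _ + _ := hsplit
    _ ≤ (1 / (1 - q)) * S + (1 / (1 - q)) * S := add_le_add hA hB
    _ = (2 / (1 - q)) * S := by ring
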